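/- Let α(x) = ∫ min{1, exp(−(τ²/2)(yᵀy − xᵀx))} q(y|x) dy where q(y|x) = N(y | r x, c² I_d). Then α(x) = E_f[ min{1, exp(−(c²τ²/2)(f − xᵀx/c²)) } ], where f follows the non-central chi-squared distribution with d degrees of freedom and non-centrality parameter r² xᵀx / c². -/

import Mathlib

open MeasureTheory Real
open scoped ENNReal NNReal

/-- Squared Euclidean norm on `ℝ^d`. -/
noncomputable def sqnorm {d : ℕ} (x : Fin d → ℝ) : ℝ := ∑ i, x i ^ 2

/-- Density of the `d`-variate Gaussian `N(m, v I_d)` (variance `v` per coordinate). -/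
noncomputable def gpdf {d : ℕ} (m : Fin d → ℝ) (v : ℝ) (x : Fin d → ℝ) : ℝ :=
  (2 * Real.pi * v) ^ (-(d : ℝ) / 2) * Real.exp (-(sqnorm (x - m)) / (2 * v))

/-- The `d`-variate Gaussian measure `N(m, v I_d)` defined via its density. -/
noncomputable def gaussMeasure {d : ℕ} (m : Fin d → ℝ) (v : ℝ) : Measure (Fin d → ℝ) :=
  volume.withDensity (fun x => ENNReal.ofReal (gpdf m v x))

lemma sqnorm_nonneg {d : ℕ} (x : Fin d → ℝ) : 0 ≤ sqnorm x :=
  Finset.sum_nonneg fun _ _ => sq_nonneg _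

lemma continuous_sqnorm {d : ℕ} : Continuous (sqnorm : (Fin d → ℝ) → ℝ) :=
  continuous_finset_sum _ fun i _ => (continuous_apply i).pow 2

lemma sqnorm_smul {d : ℕ} (a : ℝ) (w : Fin d → ℝ) : sqnorm (a • w) = a ^ 2 * sqnorm w := by
  simp [sqnorm, Finset.mul_sum, mul_pow]

lemma gpdf_nonneg {d : ℕ} (m : Fin d → ℝ) {v : ℝ} (hv : 0 < v) (y : Fin d → ℝ) :
    0 ≤ gpdf m v y := by
  unfold gpdf
  have h2 : (0:ℝ) < 2 * Real.pi * v := by positivity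
  positivity

lemma continuous_gpdf {d : ℕ} (m : Fin d → ℝ) (v : ℝ) : Continuous (gpdf m v) :=
  continuous_const.mul (Real.continuous_exp.comp
    ((continuous_sqnorm.comp (continuous_id.sub continuous_const)).neg.div_const _))

/-- `sqnorm` agrees with the squared Euclidean norm via the measurable equivalence. -/
lemma sqnorm_eq_norm_sq {d : ℕ} (w : EuclideanSpace ℝ (Fin d)) :
    sqnorm (((MeasurableEquiv.toLp 2 (Fin d → ℝ)).symm) w) = ‖w‖ ^ 2 := by
  rw [EuclideanSpace.norm_eq, Real.sq_sqrt (Finset.sum_nonneg fun _ _ => sq_nonneg _)]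
  simp [sqnorm, MeasurableEquiv.toLp_symm_apply, sq_abs]

/-- Rotation invariance: the integral of a function of `sqnorm (z + μ)` against the
standard Gaussian density depends only on `sqnorm μ`. -/
lemma rot_inv {d : ℕ} (g : ℝ → ℝ) (μ ν : Fin d → ℝ) (h : sqnorm μ = sqnorm ν) :
    ∫ z, g (sqnorm (z + μ)) * gpdf 0 1 z = ∫ z, g (sqnorm (z + ν)) * gpdf 0 1 z := by
  classical
  set e := (MeasurableEquiv.toLp 2 (Fin d → ℝ)).symm with he
  have hvp : MeasurePreserving e := EuclideanSpace.volume_preserving_symm_measurableEquiv_toLp (Fin d)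
  set μ' : EuclideanSpace ℝ (Fin d) := e.symm μ with hμ'
  set ν' : EuclideanSpace ℝ (Fin d) := e.symm ν with hν'
  have heμ : e μ' = μ := e.apply_symm_apply μ
  have heν : e ν' = ν := e.apply_symm_apply ν
  have hadd : ∀ (w w' : EuclideanSpace ℝ (Fin d)), e (w + w') = e w + e w' := fun _ _ => rfl
  have hnorm : ‖ν'‖ = ‖μ'‖ := by
    have h1 : ‖μ'‖ ^ 2 = ‖ν'‖ ^ 2 := by
      rw [← sqnorm_eq_norm_sq μ', ← sqnorm_eq_norm_sq ν', heμ, heν]; exact h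
    nlinarith [norm_nonneg μ', norm_nonneg ν']
  set T : EuclideanSpace ℝ (Fin d) ≃ₗᵢ[ℝ] EuclideanSpace ℝ (Fin d) :=
    Submodule.reflection (ℝ ∙ (ν' - μ'))ᗮ with hTdef
  have hT : T ν' = μ' := Submodule.reflection_sub hnorm
  have step1 : ∀ F : (Fin d → ℝ) → ℝ,
      ∫ z, F z = ∫ w : EuclideanSpace ℝ (Fin d), F (e w) :=
    fun F => (hvp.integral_comp e.measurableEmbedding F).symm
  have hTemb : MeasurableEmbedding (T : EuclideanSpace ℝ (Fin d) → EuclideanSpace ℝ (Fin d)) :=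
    T.toHomeomorph.toMeasurableEquiv.measurableEmbedding
  rw [step1 (fun z => g (sqnorm (z + μ)) * gpdf 0 1 z),
      step1 (fun z => g (sqnorm (z + ν)) * gpdf 0 1 z)]
  rw [← T.measurePreserving.integral_comp hTemb
      (fun w => g (sqnorm (e w + μ)) * gpdf 0 1 (e w))]
  congr 1
  funext w
  have key1 : sqnorm (e (T w) + μ) = sqnorm (e w + ν) := by
    rw [← heμ, ← hadd, ← heν, ← hadd, sqnorm_eq_norm_sq, sqnorm_eq_norm_sq, ← hT, ← map_add,
      T.norm_map]
  have key2 : gpdf 0 1 (e (T w)) = gpdf 0 1 (e w) := by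
    unfold gpdf
    congr 2
    have : ∀ v : EuclideanSpace ℝ (Fin d), sqnorm (e v - 0) = ‖v‖ ^ 2 := by
      intro v; rw [sub_zero, sqnorm_eq_norm_sq]
    rw [this, this, T.norm_map]
  rw [key1, key2]

theorem stmt6 {d : ℕ} (x : Fin d → ℝ) (r c τ : ℝ) (hc : 0 < c) (hτ : 0 < τ)
    (μ : Fin d → ℝ) (hμ : sqnorm μ = r ^ 2 * sqnorm x / c ^ 2) :
    ∫ y, min 1 (Real.exp (-(τ ^ 2 / 2) * (sqnorm y - sqnorm x))) * gpdf (r • x) (c ^ 2) y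
      = ∫ f, min 1 (Real.exp (-(c ^ 2 * τ ^ 2 / 2) * (f - sqnorm x / c ^ 2)))
          ∂(Measure.map (fun z => sqnorm (z + μ)) (gaussMeasure (0 : Fin d → ℝ) 1)) := by
  have hc2 : (0:ℝ) < c ^ 2 := by positivity
  have hcd : (0:ℝ) < c ^ d := by positivity
  set g : ℝ → ℝ := fun t => min 1 (Real.exp (-(c ^ 2 * τ ^ 2 / 2) * (t - sqnorm x / c ^ 2)))
    with hg
  set ν : Fin d → ℝ := (r / c) • x with hν
  -- RHS reduction
  have hφ : Measurable fun z : Fin d → ℝ => sqnorm (z + μ) :=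
    (continuous_sqnorm.comp (continuous_id.add continuous_const)).measurable
  have hgc : Continuous g :=
    continuous_const.min (Real.continuous_exp.comp
      (continuous_const.mul (continuous_id.sub continuous_const)))
  have hdens : Measurable fun z : Fin d → ℝ => (gpdf 0 1 z).toNNReal :=
    (continuous_gpdf 0 1).measurable.real_toNNReal
  have hRHS : ∫ f, g f ∂(Measure.map (fun z => sqnorm (z + μ)) (gaussMeasure (0 : Fin d → ℝ) 1))
      = ∫ z, g (sqnorm (z + μ)) * gpdf 0 1 z := by
    rw [integral_map hφ.aemeasurable hgc.aestronglyMeasurable, gaussMeasure]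
    rw [show (fun z : Fin d → ℝ => ENNReal.ofReal (gpdf 0 1 z))
        = (fun z => ((gpdf 0 1 z).toNNReal : ℝ≥0∞)) from rfl,
      integral_withDensity_eq_integral_smul hdens]
    congr 1
    funext z
    rw [NNReal.smul_def, smul_eq_mul, Real.coe_toNNReal _ (gpdf_nonneg 0 one_pos z), mul_comm]
  -- pointwise scaling identity
  have hsc : ∀ w : Fin d → ℝ,
      min 1 (Real.exp (-(τ ^ 2 / 2) * (sqnorm (c • w) - sqnorm x))) * gpdf (r • x) (c ^ 2) (c • w)
        = (c ^ d)⁻¹ * (g (sqnorm w) * gpdf ν 1 w) := by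
    intro w
    have h1 : -(τ ^ 2 / 2) * (sqnorm (c • w) - sqnorm x)
        = -(c ^ 2 * τ ^ 2 / 2) * (sqnorm w - sqnorm x / c ^ 2) := by
      rw [sqnorm_smul]; field_simp
    have h2 : c • w - r • x = c • (w - ν) := by
      rw [hν, smul_sub, smul_smul, mul_div_cancel₀ _ (ne_of_gt hc)]
    have h3 : (2 * Real.pi * c ^ 2) ^ (-(d : ℝ) / 2)
        = (c ^ d)⁻¹ * (2 * Real.pi * 1) ^ (-(d : ℝ) / 2) := by
      have hπ : (0:ℝ) ≤ 2 * Real.pi * 1 := by positivity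
      have : (2 * Real.pi * c ^ 2 : ℝ) = (2 * Real.pi * 1) * c ^ 2 := by ring
      rw [this, Real.mul_rpow hπ hc2.le]
      have : (c ^ 2 : ℝ) ^ (-(d : ℝ) / 2) = (c ^ d)⁻¹ := by
        have h2d : ((2:ℕ):ℝ) * (-(d:ℝ)/2) = -(d:ℝ) := by push_cast; ring
        rw [← Real.rpow_natCast c 2, ← Real.rpow_mul hc.le, h2d, Real.rpow_neg hc.le,
          Real.rpow_natCast]
      rw [this]; ring
    unfold gpdf
    rw [h1, h2, sqnorm_smul, h3]
    have h4 : -(c ^ 2 * sqnorm (w - ν)) / (2 * c ^ 2) = -(sqnorm (w - ν)) / (2 * 1) := by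
      field_simp
    rw [h4, hg]
    ring
  -- LHS reduction via scaling
  have hint := MeasureTheory.Measure.integral_comp_smul volume
    (fun y => min 1 (Real.exp (-(τ ^ 2 / 2) * (sqnorm y - sqnorm x))) * gpdf (r • x) (c ^ 2) y) c
  rw [Module.finrank_fin_fun, abs_of_pos (inv_pos.mpr hcd)] at hint
  simp only [hsc] at hint
  rw [MeasureTheory.integral_const_mul] at hint
  have hLHS : ∫ y, min 1 (Real.exp (-(τ ^ 2 / 2) * (sqnorm y - sqnorm x)))
        * gpdf (r • x) (c ^ 2) y
      = ∫ w, g (sqnorm w) * gpdf ν 1 w := by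
    have h5 : (c ^ d : ℝ) • ((c ^ d)⁻¹ * ∫ w, g (sqnorm w) * gpdf ν 1 w)
        = (c ^ d : ℝ) • ((c ^ d)⁻¹ • ∫ y, min 1 (Real.exp (-(τ ^ 2 / 2)
            * (sqnorm y - sqnorm x))) * gpdf (r • x) (c ^ 2) y) := by
      rw [← hint]
    rw [smul_smul, mul_inv_cancel₀ (ne_of_gt hcd), one_smul, smul_eq_mul, ← mul_assoc,
      mul_inv_cancel₀ (ne_of_gt hcd), one_mul] at h5
    exact h5.symm
  -- translation
  have htr : ∫ w, g (sqnorm w) * gpdf ν 1 w = ∫ z, g (sqnorm (z + ν)) * gpdf 0 1 z := by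
    rw [← MeasureTheory.integral_add_right_eq_self (fun w => g (sqnorm w) * gpdf ν 1 w) ν]
    congr 1
    funext z
    have : gpdf ν 1 (z + ν) = gpdf 0 1 z := by
      unfold gpdf; rw [add_sub_cancel_right, sub_zero]
    rw [this]
  rw [hLHS, htr, hRHS]
  exact (rot_inv g μ ν (by rw [hμ, hν, sqnorm_smul]; field_simp)).symm
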